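/- Let n ≥ 2 and 1 ≤ q ≤ n − 1 be integers, and let d be an odd integer with d ≥ q + 1. Then the number of pairs (a, b), where a : Fin (n−q) → ℕ and b ∈ ℕ satisfy a_0 + ⋯ + a_{n−q−1} + 2b = d, a_0 ≤ d − q − 1, a_j ≤ d − 1 for all 1 ≤ j ≤ n − q − 1, and b ≤ d − 1, equals ∑_{c=0}^{(d−1)/2} C(d − 2c + n − q − 1, n − q − 1) − ∑_{c=0}^{⌊q/2⌋} C(n − 2c − 1, n − q − 1) − (n − q − 1). -/

import Mathlib

open Finset

/-- Stars and bars for `piAntidiag` on `Fin m`. -/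
lemma stmt6_card_piAntidiag (m k : ℕ) (hm : 1 ≤ m) :
    (Finset.piAntidiag (Finset.univ : Finset (Fin m)) k).card = (k + m - 1).choose (m - 1) := by
  rw [← Finset.map_sym_eq_piAntidiag, Finset.card_map]
  have h2 : (Finset.univ : Finset (Fin m)).sym k = (Finset.univ : Finset (Sym (Fin m) k)) := by
    ext x; simp [Finset.mem_sym_iff]
  rw [h2, Finset.card_univ, Sym.card_sym_eq_choose, Fintype.card_fin,
    show m + k - 1 = k + m - 1 by omega, show m - 1 = (k + m - 1) - k by omega,
    Nat.choose_symm (by omega)]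

/-- The finset of solutions of `∑ a + 2b = s`. -/
noncomputable def stmt6_sols (m s : ℕ) : Finset ((Fin m → ℕ) × ℕ) :=
  (Finset.range (s / 2 + 1)).biUnion
    (fun c => (Finset.piAntidiag (Finset.univ : Finset (Fin m)) (s - 2 * c)).image
      (fun a => (a, c)))

lemma stmt6_mem_sols {m s : ℕ} (p : (Fin m → ℕ) × ℕ) :
    p ∈ stmt6_sols m s ↔ (∑ j, p.1 j) + 2 * p.2 = s := by
  simp only [stmt6_sols, Finset.mem_biUnion, Finset.mem_image, Finset.mem_range,
    Finset.mem_piAntidiag]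
  constructor
  · rintro ⟨c, hc, a, ⟨ha, -⟩, rfl⟩
    show (∑ j, a j) + 2 * c = s
    have ha' : (∑ j, a j) = s - 2 * c := ha
    omega
  · intro h
    refine ⟨p.2, by omega, p.1, ⟨show (∑ j, p.1 j) = s - 2 * p.2 by omega,
      fun i _ => Finset.mem_univ i⟩, rfl⟩

lemma stmt6_card_sols (m s : ℕ) (hm : 1 ≤ m) :
    (stmt6_sols m s).card = ∑ c ∈ Finset.range (s / 2 + 1), (s - 2 * c + m - 1).choose (m - 1) := by
  rw [stmt6_sols, Finset.card_biUnion]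
  · refine Finset.sum_congr rfl fun c _ => ?_
    rw [Finset.card_image_of_injective _ (fun a b h => by
      simpa using congrArg Prod.fst h), stmt6_card_piAntidiag _ _ hm]
  · intro c _ c' _ hne
    rw [Function.onFun, Finset.disjoint_left]
    rintro p hp hp'
    obtain ⟨a, -, rfl⟩ := Finset.mem_image.1 hp
    obtain ⟨a', -, h⟩ := Finset.mem_image.1 hp'
    exact hne (by simpa using (congrArg Prod.snd h).symm)

lemma stmt6_sum_update (m : ℕ) (a : Fin m → ℕ) (i0 : Fin m) (v : ℕ) :
    ∑ j, Function.update a i0 v j = v + (∑ j, a j) - a i0 := by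
  rw [Finset.sum_update_of_mem (Finset.mem_univ i0)]
  have h2 : ∑ j, a j = ∑ x ∈ Finset.univ \ {i0}, a x + a i0 :=
    Finset.sum_eq_sum_sdiff_singleton_add (Finset.mem_univ i0) a
  omega

theorem stmt_6 (n q d : ℕ) (hn : 2 ≤ n) (hq1 : 1 ≤ q) (hq2 : q ≤ n - 1)
    (hd : Odd d) (hdq : q + 1 ≤ d) :
    (Set.ncard {p : (Fin (n - q) → ℕ) × ℕ |
        (∑ j, p.1 j) + 2 * p.2 = d ∧
        (∀ j : Fin (n - q), ((j : ℕ) = 0 → p.1 j ≤ d - q - 1) ∧ (1 ≤ (j : ℕ) → p.1 j ≤ d - 1)) ∧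
        p.2 ≤ d - 1} : ℤ) =
      (∑ c ∈ Finset.range ((d - 1) / 2 + 1), ((d - 2 * c + n - q - 1).choose (n - q - 1) : ℤ))
        - (∑ c ∈ Finset.range (q / 2 + 1), ((n - 2 * c - 1).choose (n - q - 1) : ℤ))
        - ((n : ℤ) - q - 1) := by
  classical
  have hd2 : d % 2 = 1 := Nat.odd_iff.mp hd
  have hqn : q + 1 ≤ n := by omega
  have hm : 1 ≤ n - q := by omega
  set m := n - q with hm_def
  set i0 : Fin m := ⟨0, hm⟩ with hi0_def
  set t : ℕ := d - q with ht_def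
  set Ωf := stmt6_sols m d with hΩ_def
  set Af := (stmt6_sols m q).image
    (fun p : (Fin m → ℕ) × ℕ => (Function.update p.1 i0 (p.1 i0 + t), p.2)) with hA_def
  set Bf := (Finset.univ.filter (fun j : Fin m => 1 ≤ (j : ℕ))).image
    (fun j : Fin m => ((fun i => if i = j then d else 0 : Fin m → ℕ), (0 : ℕ))) with hB_def
  -- membership in Af
  have hmemA : ∀ p : (Fin m → ℕ) × ℕ,
      p ∈ Af ↔ ((∑ j, p.1 j) + 2 * p.2 = d ∧ t ≤ p.1 i0) := by
    intro p
    rw [hA_def, Finset.mem_image]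
    constructor
    · rintro ⟨r, hr, rfl⟩
      rw [stmt6_mem_sols] at hr
      show (∑ j, Function.update r.1 i0 (r.1 i0 + t) j) + 2 * r.2 = d ∧
        t ≤ Function.update r.1 i0 (r.1 i0 + t) i0
      have hs := stmt6_sum_update m r.1 i0 (r.1 i0 + t)
      have h0 : r.1 i0 ≤ ∑ j, r.1 j :=
        Finset.single_le_sum (fun i _ => Nat.zero_le _) (Finset.mem_univ i0)
      rw [Function.update_self]
      omega
    · rintro ⟨hsum, hle⟩
      refine ⟨(Function.update p.1 i0 (p.1 i0 - t), p.2), ?_, ?_⟩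
      · rw [stmt6_mem_sols]
        have hs := stmt6_sum_update m p.1 i0 (p.1 i0 - t)
        have h0 : p.1 i0 ≤ ∑ j, p.1 j :=
          Finset.single_le_sum (fun i _ => Nat.zero_le _) (Finset.mem_univ i0)
        show (∑ j, Function.update p.1 i0 (p.1 i0 - t) j) + 2 * p.2 = q
        omega
      · show (Function.update (Function.update p.1 i0 (p.1 i0 - t)) i0
              (Function.update p.1 i0 (p.1 i0 - t) i0 + t), p.2) = p
        rw [Prod.ext_iff]
        refine ⟨?_, rfl⟩
        funext i
        by_cases hi : i = i0
        · subst hi; simp only [Function.update_self]; omega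
        · simp only [Function.update_of_ne hi]
  -- membership in Bf
  have hmemB : ∀ p : (Fin m → ℕ) × ℕ,
      p ∈ Bf ↔ ((∑ j, p.1 j) + 2 * p.2 = d ∧ ∃ j : Fin m, 1 ≤ (j : ℕ) ∧ d ≤ p.1 j) := by
    intro p
    rw [hB_def, Finset.mem_image]
    constructor
    · rintro ⟨j, hj, rfl⟩
      simp only [Finset.mem_filter, Finset.mem_univ, true_and] at hj
      show (∑ i, (if i = j then d else 0)) + 2 * 0 = d ∧
        ∃ j' : Fin m, 1 ≤ (j' : ℕ) ∧ d ≤ (if j' = j then d else 0)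
      constructor
      · simp
      · exact ⟨j, hj, by simp⟩
    · rintro ⟨hsum, j, hj1, hjd⟩
      have h0 : p.1 j ≤ ∑ k, p.1 k :=
        Finset.single_le_sum (fun i _ => Nat.zero_le _) (Finset.mem_univ j)
      have hpj : p.1 j = d := by omega
      have hb0 : p.2 = 0 := by omega
      have hi : ∀ i, i ≠ j → p.1 i = 0 := by
        intro i hij
        have hsub : ({i, j} : Finset (Fin m)) ⊆ Finset.univ := Finset.subset_univ _
        have h2 := Finset.sum_le_sum_of_subset (f := fun k => p.1 k) hsub
        rw [Finset.sum_pair hij] at h2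
        have h2' : p.1 i + p.1 j ≤ ∑ k, p.1 k := h2
        omega
      refine ⟨j, by simp [hj1], ?_⟩
      show ((fun i => if i = j then d else 0 : Fin m → ℕ), (0 : ℕ)) = p
      rw [Prod.ext_iff]
      refine ⟨?_, hb0.symm⟩
      funext i
      by_cases hij : i = j
      · subst hij; simp [hpj]
      · simp [hij, hi i hij]
  -- the solution set equals a finset difference
  have hset : {p : (Fin m → ℕ) × ℕ |
      (∑ j, p.1 j) + 2 * p.2 = d ∧
      (∀ j : Fin m, ((j : ℕ) = 0 → p.1 j ≤ d - q - 1) ∧ (1 ≤ (j : ℕ) → p.1 j ≤ d - 1)) ∧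
      p.2 ≤ d - 1} = ↑(Ωf \ (Af ∪ Bf)) := by
    ext p
    simp only [Set.mem_setOf_eq, Finset.coe_sdiff, Set.mem_diff, Finset.coe_union,
      Set.mem_union, Finset.mem_coe, hΩ_def, stmt6_mem_sols, hmemA, hmemB]
    constructor
    · rintro ⟨hsum, hcon, hb⟩
      refine ⟨hsum, ?_⟩
      rintro (⟨-, hA⟩ | ⟨-, j, hj1, hjd⟩)
      · have := (hcon i0).1 rfl; omega
      · have := (hcon j).2 hj1; omega
    · rintro ⟨hsum, hnot⟩
      push_neg at hnot
      obtain ⟨hnA, hnB⟩ := hnot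
      refine ⟨hsum, fun j => ⟨?_, ?_⟩, by omega⟩
      · intro hj0
        have hji : j = i0 := Fin.ext hj0
        subst hji
        have := hnA hsum
        omega
      · intro hj1
        have := hnB hsum j hj1
        omega
  -- subsets and disjointness
  have hA_sub : Af ⊆ Ωf := fun p hp => (stmt6_mem_sols p).2 ((hmemA p).1 hp).1
  have hB_sub : Bf ⊆ Ωf := fun p hp => (stmt6_mem_sols p).2 ((hmemB p).1 hp).1
  have hdisj : Disjoint Af Bf := by
    rw [Finset.disjoint_left]
    intro p hpA hpB
    rw [hB_def] at hpB
    obtain ⟨j, hj, rfl⟩ := Finset.mem_image.1 hpB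
    simp only [Finset.mem_filter, Finset.mem_univ, true_and] at hj
    have h1 := ((hmemA _).1 hpA).2
    have hij : i0 ≠ j := by
      intro h
      have : (0 : ℕ) = (j : ℕ) := congrArg Fin.val h
      omega
    have h1' : t ≤ if i0 = j then d else 0 := h1
    rw [if_neg hij] at h1'
    omega
  -- cardinalities
  have hcardΩ : Ωf.card = ∑ c ∈ Finset.range (d / 2 + 1), (d - 2 * c + m - 1).choose (m - 1) :=
    stmt6_card_sols m d hm
  have hinjA : Function.Injective
      (fun p : (Fin m → ℕ) × ℕ => (Function.update p.1 i0 (p.1 i0 + t), p.2)) := by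
    intro p p' h
    simp only [Prod.mk.injEq] at h
    obtain ⟨h1, h2⟩ := h
    rw [Prod.ext_iff]
    refine ⟨?_, h2⟩
    funext i
    by_cases hi : i = i0
    · subst hi
      have := congrFun h1 i0
      simp only [Function.update_self] at this
      omega
    · have := congrFun h1 i
      simpa only [Function.update_of_ne hi] using this
  have hcardA : Af.card = ∑ c ∈ Finset.range (q / 2 + 1), (q - 2 * c + m - 1).choose (m - 1) := by
    rw [hA_def, Finset.card_image_of_injective _ hinjA, stmt6_card_sols m q hm]
  have hcardB : Bf.card = m - 1 := by
    rw [hB_def, Finset.card_image_of_injOn]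
    · have he : (Finset.univ.filter (fun j : Fin m => 1 ≤ (j : ℕ)))
          = Finset.univ.erase i0 := by
        ext j
        simp only [Finset.mem_filter, Finset.mem_univ, true_and, Finset.mem_erase, and_true,
          Ne, Fin.ext_iff]
        show 1 ≤ (j : ℕ) ↔ ¬((j : ℕ) = (0 : ℕ))
        omega
      rw [he, Finset.card_erase_of_mem (Finset.mem_univ i0), Finset.card_univ, Fintype.card_fin]
    · intro j hj j' hj' h
      simp only [Prod.mk.injEq] at h
      by_contra hne
      have := congrFun h.1 j
      rw [if_pos rfl, if_neg hne] at this
      omega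
  -- final computation
  rw [hset, Set.ncard_coe_finset,
    Finset.card_sdiff_of_subset (Finset.union_subset hA_sub hB_sub),
    Finset.card_union_of_disjoint hdisj]
  have hle : Af.card + Bf.card ≤ Ωf.card := by
    rw [← Finset.card_union_of_disjoint hdisj]
    exact Finset.card_le_card (Finset.union_subset hA_sub hB_sub)
  have e1 : ∑ c ∈ Finset.range (d / 2 + 1), (d - 2 * c + m - 1).choose (m - 1)
      = ∑ c ∈ Finset.range ((d - 1) / 2 + 1), (d - 2 * c + n - q - 1).choose (m - 1) := by
    rw [show d / 2 = (d - 1) / 2 by omega]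
    exact Finset.sum_congr rfl fun c _ => by congr 1; omega
  have e2 : ∑ c ∈ Finset.range (q / 2 + 1), (q - 2 * c + m - 1).choose (m - 1)
      = ∑ c ∈ Finset.range (q / 2 + 1), (n - 2 * c - 1).choose (m - 1) := by
    refine Finset.sum_congr rfl fun c hc => ?_
    rw [Finset.mem_range] at hc
    congr 1
    omega
  rw [Nat.cast_sub hle, Nat.cast_add, hcardΩ, hcardA, hcardB, e1, e2]
  have hc : ((m - 1 : ℕ) : ℤ) = (n : ℤ) - q - 1 := by omega
  push_cast
  rw [hc]
  ring
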